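/- Let t be a real number with 1/2 < t < 1 and set α = 2·arccos(t). If c₂ ≥ 0 is a real number satisfying cos²(α/2) = (cosh²(c₂)·sin²(α/2) − 1)·(sin²α/(1−t²) − 1), then cosh²(c₂) = (5t²−1)/((4t²−1)(1−t²)) and c₂ = log((√(5t²−1)+2t²)/√((4t²−1)(1−t²))). -/

import Mathlib

open Real

theorem segment_c2_formula (t : ℝ) (h0 : 1 / 2 < t) (h1 : t < 1)
    (c₂ : ℝ) (hc₂ : 0 ≤ c₂)
    (heq : cos (2 * arccos t / 2) ^ 2 =
        (Real.cosh c₂ ^ 2 * sin (2 * arccos t / 2) ^ 2 - 1) *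
          (sin (2 * arccos t) ^ 2 / (1 - t ^ 2) - 1)) :
    Real.cosh c₂ ^ 2 = (5 * t ^ 2 - 1) / ((4 * t ^ 2 - 1) * (1 - t ^ 2)) ∧
    c₂ = log ((Real.sqrt (5 * t ^ 2 - 1) + 2 * t ^ 2) /
        Real.sqrt ((4 * t ^ 2 - 1) * (1 - t ^ 2))) := by
  have ht0 : (0:ℝ) < t := lt_trans (by norm_num) h0
  have h4 : 0 < 4 * t ^ 2 - 1 := by nlinarith
  have h1t : 0 < 1 - t ^ 2 := by nlinarith
  have h5 : 0 < 5 * t ^ 2 - 1 := by nlinarith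
  have hD : 0 < (4 * t ^ 2 - 1) * (1 - t ^ 2) := mul_pos h4 h1t
  have hcos : cos (2 * arccos t / 2) = t := by
    rw [show 2 * arccos t / 2 = arccos t by ring, cos_arccos (by linarith) (le_of_lt h1)]
  have hsin : sin (2 * arccos t / 2) = Real.sqrt (1 - t ^ 2) := by
    rw [show 2 * arccos t / 2 = arccos t by ring, sin_arccos]
  have hsin2 : sin (2 * arccos t) = 2 * Real.sqrt (1 - t ^ 2) * t := by
    rw [sin_two_mul, sin_arccos, cos_arccos (by linarith) (le_of_lt h1)]
  have hs : Real.sqrt (1 - t ^ 2) ^ 2 = 1 - t ^ 2 := Real.sq_sqrt (le_of_lt h1t)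
  rw [hcos, hsin, hsin2] at heq
  have heq' : t ^ 2 = (Real.cosh c₂ ^ 2 * (1 - t ^ 2) - 1) * (4 * t ^ 2 - 1) := by
    have h2 : (2 * Real.sqrt (1 - t ^ 2) * t) ^ 2 = 4 * (1 - t ^ 2) * t ^ 2 := by
      rw [mul_pow, mul_pow, hs]; ring
    rw [h2, hs] at heq
    have h3 : 4 * (1 - t ^ 2) * t ^ 2 / (1 - t ^ 2) = 4 * t ^ 2 := by
      field_simp
    rw [h3] at heq
    linarith [heq]
  have hC : Real.cosh c₂ ^ 2 = (5 * t ^ 2 - 1) / ((4 * t ^ 2 - 1) * (1 - t ^ 2)) := by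
    rw [eq_div_iff (ne_of_gt hD)]
    nlinarith [heq']
  refine ⟨hC, ?_⟩
  have hsinh : Real.sinh c₂ = 2 * t ^ 2 / Real.sqrt ((4 * t ^ 2 - 1) * (1 - t ^ 2)) := by
    have hsq : Real.sinh c₂ ^ 2 = (2 * t ^ 2 / Real.sqrt ((4 * t ^ 2 - 1) * (1 - t ^ 2))) ^ 2 := by
      have h2 : Real.sinh c₂ ^ 2 = Real.cosh c₂ ^ 2 - 1 := by
        have := Real.cosh_sq_sub_sinh_sq c₂; linarith
      rw [h2, hC, div_pow, Real.sq_sqrt (le_of_lt hD)]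
      rw [div_sub_one (ne_of_gt hD), div_left_inj' (ne_of_gt hD)]
      ring
    have hs1 : 0 ≤ Real.sinh c₂ := Real.sinh_nonneg_iff.mpr hc₂
    have hs2 : 0 ≤ 2 * t ^ 2 / Real.sqrt ((4 * t ^ 2 - 1) * (1 - t ^ 2)) := by
      positivity
    exact (pow_left_inj₀ hs1 hs2 two_ne_zero).mp hsq
  have hcosh : Real.cosh c₂ = Real.sqrt (5 * t ^ 2 - 1) / Real.sqrt ((4 * t ^ 2 - 1) * (1 - t ^ 2)) := by
    have hc : 0 < Real.cosh c₂ := Real.cosh_pos c₂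
    have hr : 0 ≤ Real.sqrt (5 * t ^ 2 - 1) / Real.sqrt ((4 * t ^ 2 - 1) * (1 - t ^ 2)) := by
      positivity
    have hsq : (Real.sqrt (5 * t ^ 2 - 1) / Real.sqrt ((4 * t ^ 2 - 1) * (1 - t ^ 2))) ^ 2 =
        (5 * t ^ 2 - 1) / ((4 * t ^ 2 - 1) * (1 - t ^ 2)) := by
      rw [div_pow, Real.sq_sqrt (le_of_lt h5), Real.sq_sqrt (le_of_lt hD)]
    refine (pow_left_inj₀ (le_of_lt hc) hr two_ne_zero).mp ?_
    rw [hC, hsq]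
  have hexp : Real.exp c₂ = (Real.sqrt (5 * t ^ 2 - 1) + 2 * t ^ 2) /
      Real.sqrt ((4 * t ^ 2 - 1) * (1 - t ^ 2)) := by
    rw [← Real.cosh_add_sinh c₂, hcosh, hsinh]
    ring
  rw [← hexp, Real.log_exp]
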